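/- arXiv:2305.08949 — 4 statements merged into one kernel-verified Lean document; each statement's English description precedes it below -/
import Mathlib

section
/- The influence function is submodular in the diminishing-returns sense: for all finite sets A ⊆ C of billboard slots and every slot b ∉ C, I(A ∪ {b}) − I(A) ≥ I(C ∪ {b}) − I(C). -/
/-- The influence function is submodular (diminishing returns):
for all finite sets `A ⊆ C` of billboard slots and every slot `b ∉ C`,
`I(A ∪ {b}) − I(A) ≥ I(C ∪ {b}) − I(C)`. -/
theorem influence_submodular_diminishing_returns {B Uty : Type*} [DecidableEq B]
    (U : Finset Uty) (Pr : B → Uty → ℝ)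
    (hPr : ∀ b u, 0 ≤ Pr b u ∧ Pr b u ≤ 1)
    (A C : Finset B) (hAC : A ⊆ C) (b : B) (hb : b ∉ C) :
    (∑ u ∈ U, (1 - ∏ b' ∈ C ∪ {b}, (1 - Pr b' u))) -
      (∑ u ∈ U, (1 - ∏ b' ∈ C, (1 - Pr b' u))) ≤
    (∑ u ∈ U, (1 - ∏ b' ∈ A ∪ {b}, (1 - Pr b' u))) -
      (∑ u ∈ U, (1 - ∏ b' ∈ A, (1 - Pr b' u))) := by
  have hbA : b ∉ A := fun h => hb (hAC h)
  rw [← Finset.sum_sub_distrib, ← Finset.sum_sub_distrib]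
  apply Finset.sum_le_sum
  intro u _
  have hC : C ∪ {b} = insert b C := by rw [Finset.union_comm]; rfl
  have hA : A ∪ {b} = insert b A := by rw [Finset.union_comm]; rfl
  rw [hC, hA, Finset.prod_insert hb, Finset.prod_insert hbA]
  ring_nf
  have key : ∏ b' ∈ C, (1 - Pr b' u) ≤ ∏ b' ∈ A, (1 - Pr b' u) := by
    rw [← Finset.prod_sdiff hAC]
    have h1 : ∏ b' ∈ C \ A, (1 - Pr b' u) ≤ 1 :=
      Finset.prod_le_one (fun i _ => by linarith [(hPr i u).2])
        (fun i _ => by linarith [(hPr i u).1])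
    have h2 : 0 ≤ ∏ b' ∈ A, (1 - Pr b' u) :=
      Finset.prod_nonneg (fun i _ => by linarith [(hPr i u).2])
    nlinarith
  nlinarith [(hPr b u).1, (hPr b u).2]
end

section
/- The influence function is submodular in the lattice sense: for all finite sets A and C of billboard slots, I(A) + I(C) ≥ I(A ∪ C) + I(A ∩ C). -/
/-- The influence function is submodular in the lattice sense:
for all finite sets `A` and `C` of billboard slots,
`I(A) + I(C) ≥ I(A ∪ C) + I(A ∩ C)`. -/
theorem influence_submodular_lattice {B Uty : Type*} [DecidableEq B]
    (U : Finset Uty) (Pr : B → Uty → ℝ)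
    (hPr : ∀ b u, 0 ≤ Pr b u ∧ Pr b u ≤ 1)
    (A C : Finset B) :
    (∑ u ∈ U, (1 - ∏ b ∈ A ∪ C, (1 - Pr b u))) +
      (∑ u ∈ U, (1 - ∏ b ∈ A ∩ C, (1 - Pr b u))) ≤
    (∑ u ∈ U, (1 - ∏ b ∈ A, (1 - Pr b u))) +
      (∑ u ∈ U, (1 - ∏ b ∈ C, (1 - Pr b u))) := by
  rw [← Finset.sum_add_distrib, ← Finset.sum_add_distrib]
  apply Finset.sum_le_sum
  intro u _
  have hq0 : ∀ b ∈ (A \ C : Finset B), 0 ≤ 1 - Pr b u := fun b _ => by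
    linarith [(hPr b u).2]
  have hq1 : ∀ b ∈ (A \ C : Finset B), 1 - Pr b u ≤ 1 := fun b _ => by
    linarith [(hPr b u).1]
  have hq0' : ∀ b ∈ (C \ A : Finset B), 0 ≤ 1 - Pr b u := fun b _ => by
    linarith [(hPr b u).2]
  have hq1' : ∀ b ∈ (C \ A : Finset B), 1 - Pr b u ≤ 1 := fun b _ => by
    linarith [(hPr b u).1]
  have hx0 : 0 ≤ ∏ b ∈ A ∩ C, (1 - Pr b u) :=
    Finset.prod_nonneg fun b _ => by linarith [(hPr b u).2]
  have ha0 : 0 ≤ ∏ b ∈ A \ C, (1 - Pr b u) := Finset.prod_nonneg hq0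
  have ha1 : ∏ b ∈ A \ C, (1 - Pr b u) ≤ 1 := Finset.prod_le_one hq0 hq1
  have hc0 : 0 ≤ ∏ b ∈ C \ A, (1 - Pr b u) := Finset.prod_nonneg hq0'
  have hc1 : ∏ b ∈ C \ A, (1 - Pr b u) ≤ 1 := Finset.prod_le_one hq0' hq1'
  have hA : (∏ b ∈ A ∩ C, (1 - Pr b u)) * ∏ b ∈ A \ C, (1 - Pr b u)
      = ∏ b ∈ A, (1 - Pr b u) := Finset.prod_inter_mul_prod_diff A C _
  have hC : (∏ b ∈ A ∩ C, (1 - Pr b u)) * ∏ b ∈ C \ A, (1 - Pr b u)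
      = ∏ b ∈ C, (1 - Pr b u) := by
    rw [Finset.inter_comm]; exact Finset.prod_inter_mul_prod_diff C A _
  have hU : ∏ b ∈ A ∪ C, (1 - Pr b u)
      = (∏ b ∈ A, (1 - Pr b u)) * ∏ b ∈ C \ A, (1 - Pr b u) := by
    rw [← Finset.prod_union Finset.disjoint_sdiff, Finset.union_sdiff_self_eq_union]
  rw [hU, ← hA, ← hC]
  nlinarith [mul_nonneg hx0 (mul_nonneg (by linarith : (0:ℝ) ≤ 1 - ∏ b ∈ A \ C, (1 - Pr b u)) (by linarith : (0:ℝ) ≤ 1 - ∏ b ∈ C \ A, (1 - Pr b u)))]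
end

section
/- Arithmetic core of Lemma 2: let q ≥ 1 be a natural number, θ ≥ 0 a real number with θ·(q−1) ≤ 1, and let a_1 ≥ a_2 ≥ … ≥ a_q ≥ 0 be real numbers. If S is a real number with S ≥ Σ_{i=1}^q (1 − (i−1)·θ)·a_i, then S ≥ (1/2)·Σ_{i=1}^q a_i. -/
/-- Arithmetic core of Lemma 2: let `q ≥ 1`, `θ ≥ 0` with
`θ·(q−1) ≤ 1`, and `a_1 ≥ a_2 ≥ … ≥ a_q ≥ 0`. If
`S ≥ ∑_{i=1}^q (1 − (i−1)·θ)·a_i`, then `S ≥ (1/2)·∑_{i=1}^q a_i`. -/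
theorem lemma2_arithmetic_core (q : ℕ) (hq : 1 ≤ q) (θ : ℝ) (hθ : 0 ≤ θ)
    (hθq : θ * ((q : ℝ) - 1) ≤ 1) (a : ℕ → ℝ)
    (ha_nonneg : ∀ i, 1 ≤ i → i ≤ q → 0 ≤ a i)
    (ha_mono : ∀ i j, 1 ≤ i → i ≤ j → j ≤ q → a j ≤ a i)
    (S : ℝ)
    (hS : ∑ i ∈ Finset.Icc 1 q, (1 - ((i : ℝ) - 1) * θ) * a i ≤ S) :
    (1 / 2) * ∑ i ∈ Finset.Icc 1 q, a i ≤ S := by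
  -- Key Abel-type estimate
  have key : ∀ n, 1 ≤ n → n ≤ q →
      (n : ℝ) / 2 * (1 - ((n : ℝ) - 1) * θ) * a n ≤
        ∑ i ∈ Finset.Icc 1 n, (1 / 2 - ((i : ℝ) - 1) * θ) * a i := by
    intro n
    induction n with
    | zero => intro h; omega
    | succ m ih =>
      intro _ hmq
      rcases Nat.eq_or_lt_of_le (Nat.one_le_iff_ne_zero.mpr (Nat.succ_ne_zero m)) with h1 | h1
      · have hm0 : m = 0 := by omega
        subst hm0
        norm_num
      · have hm1 : 1 ≤ m := by omega
        have hmq' : m ≤ q := by omega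
        have ihm := ih hm1 hmq'
        rw [Finset.sum_Icc_succ_top (by omega : 1 ≤ m + 1)]
        have hcoef : 0 ≤ (m : ℝ) / 2 * (1 - ((m : ℝ) - 1) * θ) := by
          have hmq2 : (m : ℝ) ≤ (q : ℝ) := by exact_mod_cast hmq'
          have : θ * ((m : ℝ) - 1) ≤ θ * ((q : ℝ) - 1) := by
            apply mul_le_mul_of_nonneg_left (by linarith) hθ
          have hm0 : (0 : ℝ) ≤ (m : ℝ) := Nat.cast_nonneg m
          nlinarith
        have hmono : a (m + 1) ≤ a m := ha_mono m (m + 1) hm1 (by omega) hmq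
        have h2 : (m : ℝ) / 2 * (1 - ((m : ℝ) - 1) * θ) * a (m + 1) ≤
            (m : ℝ) / 2 * (1 - ((m : ℝ) - 1) * θ) * a m :=
          mul_le_mul_of_nonneg_left hmono hcoef
        push_cast
        nlinarith [ihm, h2]
  have hq0 : 0 < (q : ℝ) := by exact_mod_cast hq
  have haq : 0 ≤ a q := ha_nonneg q hq le_rfl
  have hkey := key q hq le_rfl
  have hpos : 0 ≤ (q : ℝ) / 2 * (1 - ((q : ℝ) - 1) * θ) * a q := by
    have : 0 ≤ 1 - ((q : ℝ) - 1) * θ := by nlinarith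
    positivity
  have hsplit : ∑ i ∈ Finset.Icc 1 q, (1 - ((i : ℝ) - 1) * θ) * a i
      = (1 / 2) * ∑ i ∈ Finset.Icc 1 q, a i
        + ∑ i ∈ Finset.Icc 1 q, (1 / 2 - ((i : ℝ) - 1) * θ) * a i := by
    rw [Finset.mul_sum, ← Finset.sum_add_distrib]
    apply Finset.sum_congr rfl
    intro i _
    ring
  linarith
end

section
/- Lemma 2 (influence bound for a θ-partition, via the chain hypothesis of its proof): let Z_1, …, Z_q be finite sets of billboard slots sorted so that I(Z_1) ≥ I(Z_2) ≥ … ≥ I(Z_q), let θ ≥ 0 be a real number with θ·(q−1) ≤ 1, and suppose that for every i with 1 ≤ i ≤ q, I(Z_1 ∪ … ∪ Z_i) ≥ I(Z_1 ∪ … ∪ Z_{i−1}) + (1 − (i−1)·θ)·I(Z_i) (where the union over the empty index range is ∅). Then I(Z_1 ∪ … ∪ Z_q) ≥ (1/2)·Σ_{i=1}^q I(Z_i). -/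
lemma gauss_aux (q : ℕ) : ∑ i ∈ Finset.Icc 1 q, ((i : ℝ) - 1) = (q : ℝ) * ((q : ℝ) - 1) / 2 := by
  induction q with
  | zero => simp
  | succ n ih =>
      rw [Finset.sum_Icc_succ_top (Nat.succ_le_succ (Nat.zero_le n)), ih]
      push_cast; ring


/-- Lemma 2 (influence bound for a θ-partition, via the chain
hypothesis of its proof): let `Z_1, …, Z_q` be finite sets of billboard slots
sorted so that `I(Z_1) ≥ I(Z_2) ≥ … ≥ I(Z_q)`, let `θ ≥ 0` with
`θ·(q−1) ≤ 1`, and suppose for every `1 ≤ i ≤ q` that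
`I(Z_1 ∪ … ∪ Z_i) ≥ I(Z_1 ∪ … ∪ Z_{i−1}) + (1 − (i−1)·θ)·I(Z_i)`.
Then `I(Z_1 ∪ … ∪ Z_q) ≥ (1/2)·∑_{i=1}^q I(Z_i)`. -/
theorem lemma2_theta_partition {B Uty : Type*} [DecidableEq B]
    (U : Finset Uty) (Pr : B → Uty → ℝ)
    (hPr : ∀ b u, 0 ≤ Pr b u ∧ Pr b u ≤ 1)
    (q : ℕ) (hq : 1 ≤ q) (Z : ℕ → Finset B)
    (θ : ℝ) (hθ : 0 ≤ θ) (hθq : θ * ((q : ℝ) - 1) ≤ 1)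
    (I : Finset B → ℝ)
    (hI : ∀ C : Finset B, I C = ∑ u ∈ U, (1 - ∏ b ∈ C, (1 - Pr b u)))
    (hsorted : ∀ i j, 1 ≤ i → i ≤ j → j ≤ q → I (Z j) ≤ I (Z i))
    (hchain : ∀ i, 1 ≤ i → i ≤ q →
      I ((Finset.Icc 1 (i - 1)).biUnion Z) + (1 - ((i : ℝ) - 1) * θ) * I (Z i)
        ≤ I ((Finset.Icc 1 i).biUnion Z)) :
    (1 / 2) * ∑ i ∈ Finset.Icc 1 q, I (Z i) ≤
      I ((Finset.Icc 1 q).biUnion Z) := by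
  -- nonnegativity of I
  have hInn : ∀ C : Finset B, 0 ≤ I C := by
    intro C
    rw [hI]
    apply Finset.sum_nonneg
    intro u _
    have : ∏ b ∈ C, (1 - Pr b u) ≤ 1 := by
      apply Finset.prod_le_one
      · intro b _; linarith [(hPr b u).2]
      · intro b _; linarith [(hPr b u).1]
    linarith
  -- telescoping chain bound
  have key : ∀ k, k ≤ q →
      ∑ i ∈ Finset.Icc 1 k, (1 - ((i : ℝ) - 1) * θ) * I (Z i)
        ≤ I ((Finset.Icc 1 k).biUnion Z) := by
    intro k
    induction k with
    | zero =>
        intro _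
        simp
        rw [hI]
        apply Finset.sum_nonneg
        intro u _; simp
    | succ n ih =>
        intro hk
        have hn : n ≤ q := Nat.le_of_succ_le hk
        have h1 : (1:ℕ) ≤ n + 1 := Nat.succ_le_succ (Nat.zero_le n)
        have := hchain (n+1) h1 hk
        rw [Finset.sum_Icc_succ_top h1]
        have hrw : (n + 1 : ℕ) - 1 = n := rfl
        rw [hrw] at this
        have hcast : ((n + 1 : ℕ) : ℝ) - 1 = (n : ℝ) := by push_cast; ring
        rw [hcast] at this
        calc ∑ i ∈ Finset.Icc 1 n, (1 - ((i : ℝ) - 1) * θ) * I (Z i)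
              + (1 - (((n+1:ℕ) : ℝ) - 1) * θ) * I (Z (n+1))
            ≤ I ((Finset.Icc 1 n).biUnion Z) + (1 - ((n:ℝ)) * θ) * I (Z (n+1)) := by
              rw [hcast]; linarith [ih hn]
          _ ≤ I ((Finset.Icc 1 (n+1)).biUnion Z) := this
  have hkey := key q le_rfl
  -- Chebyshev/antivary bound: ∑ (i-1) * I(Z i) ≤ ((q-1)/2) * ∑ I(Z i)
  set S := ∑ i ∈ Finset.Icc 1 q, I (Z i) with hS
  have hSnn : 0 ≤ S := Finset.sum_nonneg fun i _ => hInn (Z i)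
  have hanti : AntivaryOn (fun i : ℕ => (i : ℝ) - 1) (fun i => I (Z i))
      (Finset.Icc 1 q : Finset ℕ) := by
    intro i hi j hj hij
    simp only [Finset.coe_Icc, Set.mem_Icc] at hi hj
    simp only at hij ⊢
    have hji : j ≤ i := by
      by_contra h
      push_neg at h
      exact absurd (hsorted i j hi.1 (le_of_lt h) hj.2) (not_le.mpr hij)
    have : (j : ℝ) ≤ (i : ℝ) := by exact_mod_cast hji
    linarith
  have hcheb := hanti.card_mul_sum_le_sum_mul_sum
  have hcard : ((Finset.Icc 1 q).card : ℝ) = (q : ℝ) := by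
    rw [Nat.card_Icc]; push_cast; simp
  have hgauss := gauss_aux q
  rw [hcard, hgauss, ← hS] at hcheb
  -- from chebyshev: (q) * ∑ (i-1)*I ≤ q*(q-1)/2 * S
  have hq1 : (1:ℝ) ≤ (q : ℝ) := by exact_mod_cast hq
  have hqpos : (0:ℝ) < (q : ℝ) := by linarith
  have hT : ∑ i ∈ Finset.Icc 1 q, ((i : ℝ) - 1) * I (Z i) ≤ ((q : ℝ) - 1) / 2 * S := by
    have := hcheb
    nlinarith [this]
  -- also need ∑ (i-1)*I ≥ 0? Not necessarily, but each term is nonneg since i ≥ 1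
  have hsplit : ∑ i ∈ Finset.Icc 1 q, (1 - ((i : ℝ) - 1) * θ) * I (Z i)
      = S - θ * ∑ i ∈ Finset.Icc 1 q, ((i : ℝ) - 1) * I (Z i) := by
    rw [hS, Finset.mul_sum, ← Finset.sum_sub_distrib]
    apply Finset.sum_congr rfl
    intro i _; ring
  rw [hsplit] at hkey
  have hTnn : 0 ≤ ∑ i ∈ Finset.Icc 1 q, ((i : ℝ) - 1) * I (Z i) := by
    apply Finset.sum_nonneg
    intro i hi
    simp only [Finset.mem_Icc] at hi
    have : (1:ℝ) ≤ (i : ℝ) := by exact_mod_cast hi.1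
    have := hInn (Z i)
    nlinarith
  nlinarith [hkey, hT, hSnn, mul_le_mul_of_nonneg_left hT hθ]
end
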